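/- Let n ≥ 1 and let g_1,…,g_{n+2} be real constants. Define Q : ℝ^n × ℝ^{n+1} → ℝ by Q(x,z) = exp( g_1 e^{z_1} + Σ_{i=1}^{n} ( e^{x_i − z_i} + g_{i+1} e^{z_{i+1} − x_i} ) + g_{n+2} e^{−z_{n+1} − x_n} ). Then for all x ∈ ℝ^n, z ∈ ℝ^{n+1}: −(1/2) Σ_{i=1}^{n} ∂²Q/∂x_i² + [ g_1 e^{x_1} + Σ_{i=1}^{n−1} g_{i+1} e^{x_{i+1} − x_i} + 2 g_{n+1} g_{n+2} e^{−2 x_n} ] Q = −(1/2) Σ_{i=1}^{n+1} ∂²Q/∂z_i² + [ (g_1/2)( e^{z_1} + g_1 e^{2 z_1} ) + Σ_{i=1}^{n} g_{i+1} e^{z_{i+1} − z_i} + g_{n+2} e^{−z_{n+1} − z_n} ] Q. That is, Q intertwines the quadratic Hamiltonians of the twisted affine A^{(2)}_{2n} closed Toda chain and of the BC^{(2)}_{n+1} closed Toda chain. -/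

import Mathlib

open Real

/-- Second partial derivative of `f` in the `i`-th coordinate at `x`. -/
noncomputable def pd2 {k : ℕ} (f : (Fin k → ℝ) → ℝ) (i : Fin k) (x : Fin k → ℝ) : ℝ :=
  deriv (deriv (fun t : ℝ => f (Function.update x i t))) (x i)

/-- The elementary kernel intertwining the twisted affine `A^{(2)}_{2n}` and
`BC^{(2)}_{n+1}` closed Toda chains (`n = m + 1 ≥ 1`):
`Q(x,z) = exp( g_1 e^{z_1} + Σ_{i=1}^{n} ( e^{x_i − z_i} + g_{i+1} e^{z_{i+1} − x_i} ) + g_{n+2} e^{−z_{n+1} − x_n} )`. -/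
noncomputable def Qker (m : ℕ) (g : Fin (m + 3) → ℝ)
    (x : Fin (m + 1) → ℝ) (z : Fin (m + 2) → ℝ) : ℝ :=
  Real.exp (g 0 * Real.exp (z 0)
    + (∑ i : Fin (m + 1), (Real.exp (x i - z i.castSucc)
        + g i.succ.castSucc * Real.exp (z i.succ - x i)))
    + g (Fin.last (m + 2)) * Real.exp (-z (Fin.last (m + 1)) - x (Fin.last m)))

namespace A2BC

noncomputable def aF (m : ℕ) (x : Fin (m + 1) → ℝ) (z : Fin (m + 2) → ℝ) (i : Fin (m + 1)) : ℝ :=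
  Real.exp (x i - z i.castSucc)

noncomputable def bF (m : ℕ) (g : Fin (m + 3) → ℝ) (x : Fin (m + 1) → ℝ)
    (z : Fin (m + 2) → ℝ) (i : Fin (m + 1)) : ℝ :=
  g i.succ.castSucc * Real.exp (z i.succ - x i)

noncomputable def cF (m : ℕ) (g : Fin (m + 3) → ℝ) (x : Fin (m + 1) → ℝ)
    (z : Fin (m + 2) → ℝ) : ℝ :=
  g (Fin.last (m + 2)) * Real.exp (-z (Fin.last (m + 1)) - x (Fin.last m))

noncomputable def dF (m : ℕ) (g : Fin (m + 3) → ℝ) (z : Fin (m + 2) → ℝ) : ℝ :=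
  g 0 * Real.exp (z 0)

lemma dd_exp (F φ φ' φ'' : ℝ → ℝ) (hF : ∀ s, F s = Real.exp (φ s))
    (h1 : ∀ t, HasDerivAt φ (φ' t) t) (h2 : ∀ t, HasDerivAt φ' (φ'' t) t) (t : ℝ) :
    deriv (deriv F) t = ((φ' t) ^ 2 + φ'' t) * Real.exp (φ t) := by
  have hF' : F = fun s => Real.exp (φ s) := funext hF
  subst hF'
  have hd : deriv (fun s => Real.exp (φ s)) = fun s => Real.exp (φ s) * φ' s := by
    funext s
    exact ((h1 s).exp).deriv
  rw [hd]
  have h3 : HasDerivAt (fun s => Real.exp (φ s) * φ' s)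
      (Real.exp (φ t) * φ' t * φ' t + Real.exp (φ t) * φ'' t) t :=
    ((h1 t).exp).mul (h2 t)
  rw [h3.deriv]; ring

lemma hA_exp (t c : ℝ) : HasDerivAt (fun s : ℝ => Real.exp (s - c)) (Real.exp (t - c)) t := by
  simpa using ((hasDerivAt_id t).sub_const c).exp

lemma hB_exp (t c gg : ℝ) :
    HasDerivAt (fun s : ℝ => gg * Real.exp (c - s)) (-(gg * Real.exp (c - t))) t := by
  have := (((hasDerivAt_id t).const_sub c).exp).const_mul gg
  exact this.congr_deriv (by simp)

lemma hC_exp (t c gg : ℝ) :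
    HasDerivAt (fun s : ℝ => gg * Real.exp (c - s)) (gg * Real.exp (c - t) * (-1)) t := by
  have := hB_exp t c gg
  convert this using 1; ring

lemma pd2_x (m : ℕ) (g : Fin (m + 3) → ℝ) (x : Fin (m + 1) → ℝ) (z : Fin (m + 2) → ℝ)
    (i : Fin (m + 1)) :
    pd2 (fun u => Qker m g u z) i x =
      ((aF m x z i - bF m g x z i - (if i = Fin.last m then cF m g x z else 0)) ^ 2
        + (aF m x z i + bF m g x z i + (if i = Fin.last m then cF m g x z else 0)))
        * Qker m g x z := by
  classical
  set D1 : ℝ → ℝ := fun t =>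
    Real.exp (t - z i.castSucc) - g i.succ.castSucc * Real.exp (z i.succ - t)
      + (if i = Fin.last m then
          -(g (Fin.last (m + 2)) * Real.exp (-z (Fin.last (m + 1)) - t)) else 0) with hD1
  set D2 : ℝ → ℝ := fun t =>
    Real.exp (t - z i.castSucc) + g i.succ.castSucc * Real.exp (z i.succ - t)
      + (if i = Fin.last m then
          g (Fin.last (m + 2)) * Real.exp (-z (Fin.last (m + 1)) - t) else 0) with hD2
  have h1 : ∀ t : ℝ, HasDerivAt (fun s =>
      g 0 * Real.exp (z 0)
        + (∑ i' : Fin (m + 1), (Real.exp (Function.update x i s i' - z i'.castSucc)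
            + g i'.succ.castSucc * Real.exp (z i'.succ - Function.update x i s i')))
        + g (Fin.last (m + 2)) * Real.exp (-z (Fin.last (m + 1))
            - Function.update x i s (Fin.last m))) (D1 t) t := by
    intro t
    have hsum : HasDerivAt (fun s => ∑ i' : Fin (m + 1),
        (Real.exp (Function.update x i s i' - z i'.castSucc)
          + g i'.succ.castSucc * Real.exp (z i'.succ - Function.update x i s i')))
        (∑ i' : Fin (m + 1), (if i' = i then
          Real.exp (t - z i'.castSucc) - g i'.succ.castSucc * Real.exp (z i'.succ - t)
          else 0)) t := by
      apply HasDerivAt.fun_sum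
      intro i' _
      by_cases h : i' = i
      · subst h
        rw [if_pos rfl]
        simp only [Function.update_self]
        have := (hA_exp t (z i'.castSucc)).add (hB_exp t (z i'.succ) (g i'.succ.castSucc))
        exact this.congr_deriv (by ring)
      · rw [if_neg h]
        have hupd : ∀ s : ℝ, Function.update x i s i' = x i' :=
          fun s => Function.update_of_ne h s x
        simp only [hupd]
        exact hasDerivAt_const t _
    have hlast : HasDerivAt (fun s =>
        g (Fin.last (m + 2)) * Real.exp (-z (Fin.last (m + 1))
          - Function.update x i s (Fin.last m)))
        (if i = Fin.last m then
          -(g (Fin.last (m + 2)) * Real.exp (-z (Fin.last (m + 1)) - t)) else 0) t := by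
      by_cases hi : i = Fin.last m
      · subst hi
        rw [if_pos rfl]
        simp only [Function.update_self]
        exact hB_exp t (-z (Fin.last (m + 1))) (g (Fin.last (m + 2)))
      · rw [if_neg hi]
        have hupd : ∀ s : ℝ, Function.update x i s (Fin.last m) = x (Fin.last m) :=
          fun s => Function.update_of_ne (Ne.symm hi) s x
        simp only [hupd]
        exact hasDerivAt_const t _
    have := ((hasDerivAt_const t (g 0 * Real.exp (z 0))).add hsum).add hlast
    refine this.congr_deriv ?_
    rw [hD1, Finset.sum_ite_eq' Finset.univ i]
    simp
  have h2 : ∀ t : ℝ, HasDerivAt D1 (D2 t) t := by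
    intro t
    rw [hD1, hD2]
    by_cases hi : i = Fin.last m
    · simp only [if_pos hi]
      have := ((hA_exp t (z i.castSucc)).sub
        (hB_exp t (z i.succ) (g i.succ.castSucc))).add
        ((hB_exp t (-z (Fin.last (m + 1))) (g (Fin.last (m + 2)))).neg)
      refine this.congr_deriv ?_
      ring
    · simp only [if_neg hi, add_zero]
      have := ((hA_exp t (z i.castSucc)).sub
        (hB_exp t (z i.succ) (g i.succ.castSucc)))
      refine this.congr_deriv ?_
      ring
  have hmain := dd_exp (fun t => Qker m g (Function.update x i t) z)
      (fun s => g 0 * Real.exp (z 0)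
        + (∑ i' : Fin (m + 1), (Real.exp (Function.update x i s i' - z i'.castSucc)
            + g i'.succ.castSucc * Real.exp (z i'.succ - Function.update x i s i')))
        + g (Fin.last (m + 2)) * Real.exp (-z (Fin.last (m + 1))
            - Function.update x i s (Fin.last m)))
      D1 D2 (fun s => rfl) h1 h2 (x i)
  have hpd : pd2 (fun u => Qker m g u z) i x
      = deriv (deriv (fun t => Qker m g (Function.update x i t) z)) (x i) := rfl
  rw [hpd, hmain]
  simp only [Function.update_eq_self]
  have hfac : Real.exp (g 0 * Real.exp (z 0)
      + (∑ i' : Fin (m + 1), (Real.exp (x i' - z i'.castSucc)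
          + g i'.succ.castSucc * Real.exp (z i'.succ - x i')))
      + g (Fin.last (m + 2)) * Real.exp (-z (Fin.last (m + 1)) - x (Fin.last m)))
      = Qker m g x z := rfl
  rw [hfac]
  have e1 : D1 (x i)
      = aF m x z i - bF m g x z i - (if i = Fin.last m then cF m g x z else 0) := by
    rw [hD1]
    split_ifs with hi
    · rw [hi]
      simp only [aF, bF, cF]
      ring
    · simp only [aF, bF, cF]
      ring
  have e2 : D2 (x i)
      = aF m x z i + bF m g x z i + (if i = Fin.last m then cF m g x z else 0) := by
    rw [hD2]
    split_ifs with hi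
    · rw [hi]
      simp only [aF, bF, cF]
    · simp only [aF, bF, cF]
  rw [e1, e2]

lemma hE_exp (t c : ℝ) : HasDerivAt (fun s : ℝ => Real.exp (c - s)) (-Real.exp (c - t)) t := by
  simpa using hB_exp t c 1

lemma hG_exp (t c gg : ℝ) :
    HasDerivAt (fun s : ℝ => gg * Real.exp (s - c)) (gg * Real.exp (t - c)) t :=
  (hA_exp t c).const_mul gg

lemma hH_exp (t gg : ℝ) : HasDerivAt (fun s : ℝ => gg * Real.exp s) (gg * Real.exp t) t := by
  simpa using (hasDerivAt_id t).exp.const_mul gg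

lemma hF_exp (t c gg : ℝ) :
    HasDerivAt (fun s : ℝ => gg * Real.exp (-s - c)) (-(gg * Real.exp (-t - c))) t := by
  have := (((hasDerivAt_id t).neg.sub_const c).exp).const_mul gg
  exact this.congr_deriv (by simp)

lemma neg_ite_zero (P : Prop) [Decidable P] (v : ℝ) :
    (if P then -v else 0) = -(if P then v else 0) := by
  split_ifs <;> simp

lemma pd2_z (m : ℕ) (g : Fin (m + 3) → ℝ) (x : Fin (m + 1) → ℝ) (z : Fin (m + 2) → ℝ)
    (j : Fin (m + 2)) :
    pd2 (fun v => Qker m g x v) j z =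
      (((Fin.cons (dF m g z) (bF m g x z) : Fin (m + 2) → ℝ) j
          - (Fin.snoc (aF m x z) (cF m g x z) : Fin (m + 2) → ℝ) j) ^ 2
        + ((Fin.cons (dF m g z) (bF m g x z) : Fin (m + 2) → ℝ) j
          + (Fin.snoc (aF m x z) (cF m g x z) : Fin (m + 2) → ℝ) j)) * Qker m g x z := by
  classical
  set D1 : ℝ → ℝ := fun t =>
    (if (0 : Fin (m + 2)) = j then g 0 * Real.exp t else 0)
      + (∑ i : Fin (m + 1), ((if i.castSucc = j then -Real.exp (x i - t) else 0)
          + (if i.succ = j then g i.succ.castSucc * Real.exp (t - x i) else 0)))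
      + (if Fin.last (m + 1) = j then
          -(g (Fin.last (m + 2)) * Real.exp (-t - x (Fin.last m))) else 0) with hD1
  set D2 : ℝ → ℝ := fun t =>
    (if (0 : Fin (m + 2)) = j then g 0 * Real.exp t else 0)
      + (∑ i : Fin (m + 1), ((if i.castSucc = j then Real.exp (x i - t) else 0)
          + (if i.succ = j then g i.succ.castSucc * Real.exp (t - x i) else 0)))
      + (if Fin.last (m + 1) = j then
          g (Fin.last (m + 2)) * Real.exp (-t - x (Fin.last m)) else 0) with hD2
  have h1 : ∀ t : ℝ, HasDerivAt (fun s =>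
      g 0 * Real.exp (Function.update z j s 0)
        + (∑ i : Fin (m + 1), (Real.exp (x i - Function.update z j s i.castSucc)
            + g i.succ.castSucc * Real.exp (Function.update z j s i.succ - x i)))
        + g (Fin.last (m + 2)) * Real.exp (-Function.update z j s (Fin.last (m + 1))
            - x (Fin.last m))) (D1 t) t := by
    intro t
    have hd : HasDerivAt (fun s => g 0 * Real.exp (Function.update z j s 0))
        (if (0 : Fin (m + 2)) = j then g 0 * Real.exp t else 0) t := by
      by_cases h : (0 : Fin (m + 2)) = j
      · subst h
        rw [if_pos rfl]
        simp only [Function.update_self]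
        exact hH_exp t (g 0)
      · rw [if_neg h]
        have hupd : ∀ s : ℝ, Function.update z j s 0 = z 0 :=
          fun s => Function.update_of_ne h s z
        simp only [hupd]
        exact hasDerivAt_const t _
    have hsum : HasDerivAt (fun s => ∑ i : Fin (m + 1),
        (Real.exp (x i - Function.update z j s i.castSucc)
          + g i.succ.castSucc * Real.exp (Function.update z j s i.succ - x i)))
        (∑ i : Fin (m + 1), ((if i.castSucc = j then -Real.exp (x i - t) else 0)
          + (if i.succ = j then g i.succ.castSucc * Real.exp (t - x i) else 0))) t := by
      apply HasDerivAt.fun_sum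
      intro i _
      have t1 : HasDerivAt (fun s => Real.exp (x i - Function.update z j s i.castSucc))
          (if i.castSucc = j then -Real.exp (x i - t) else 0) t := by
        by_cases h : i.castSucc = j
        · subst h
          rw [if_pos rfl]
          simp only [Function.update_self]
          exact hE_exp t (x i)
        · rw [if_neg h]
          have hupd : ∀ s : ℝ, Function.update z j s i.castSucc = z i.castSucc :=
            fun s => Function.update_of_ne h s z
          simp only [hupd]
          exact hasDerivAt_const t _
      have t2 : HasDerivAt (fun s =>
          g i.succ.castSucc * Real.exp (Function.update z j s i.succ - x i))
          (if i.succ = j then g i.succ.castSucc * Real.exp (t - x i) else 0) t := by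
        by_cases h : i.succ = j
        · subst h
          rw [if_pos rfl]
          simp only [Function.update_self]
          exact hG_exp t (x i) _
        · rw [if_neg h]
          have hupd : ∀ s : ℝ, Function.update z j s i.succ = z i.succ :=
            fun s => Function.update_of_ne h s z
          simp only [hupd]
          exact hasDerivAt_const t _
      exact t1.add t2
    have hlast : HasDerivAt (fun s =>
        g (Fin.last (m + 2)) * Real.exp (-Function.update z j s (Fin.last (m + 1))
          - x (Fin.last m)))
        (if Fin.last (m + 1) = j then
          -(g (Fin.last (m + 2)) * Real.exp (-t - x (Fin.last m))) else 0) t := by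
      by_cases h : Fin.last (m + 1) = j
      · subst h
        rw [if_pos rfl]
        simp only [Function.update_self]
        exact hF_exp t (x (Fin.last m)) _
      · rw [if_neg h]
        have hupd : ∀ s : ℝ, Function.update z j s (Fin.last (m + 1)) = z (Fin.last (m + 1)) :=
          fun s => Function.update_of_ne h s z
        simp only [hupd]
        exact hasDerivAt_const t _
    exact (hd.add hsum).add hlast
  have h2 : ∀ t : ℝ, HasDerivAt D1 (D2 t) t := by
    intro t
    rw [hD1, hD2]
    have hd : HasDerivAt (fun s : ℝ => if (0 : Fin (m + 2)) = j then g 0 * Real.exp s else 0)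
        (if (0 : Fin (m + 2)) = j then g 0 * Real.exp t else 0) t := by
      by_cases h : (0 : Fin (m + 2)) = j
      · simp only [if_pos h]
        exact hH_exp t (g 0)
      · simp only [if_neg h]
        exact hasDerivAt_const t _
    have hsum : HasDerivAt (fun s : ℝ => ∑ i : Fin (m + 1),
        ((if i.castSucc = j then -Real.exp (x i - s) else 0)
          + (if i.succ = j then g i.succ.castSucc * Real.exp (s - x i) else 0)))
        (∑ i : Fin (m + 1), ((if i.castSucc = j then Real.exp (x i - t) else 0)
          + (if i.succ = j then g i.succ.castSucc * Real.exp (t - x i) else 0))) t := by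
      apply HasDerivAt.fun_sum
      intro i _
      have t1 : HasDerivAt (fun s : ℝ => if i.castSucc = j then -Real.exp (x i - s) else 0)
          (if i.castSucc = j then Real.exp (x i - t) else 0) t := by
        by_cases h : i.castSucc = j
        · simp only [if_pos h]
          exact (hE_exp t (x i)).neg.congr_deriv (by simp)
        · simp only [if_neg h]
          exact hasDerivAt_const t _
      have t2 : HasDerivAt
          (fun s : ℝ => if i.succ = j then g i.succ.castSucc * Real.exp (s - x i) else 0)
          (if i.succ = j then g i.succ.castSucc * Real.exp (t - x i) else 0) t := by
        by_cases h : i.succ = j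
        · simp only [if_pos h]
          exact hG_exp t (x i) _
        · simp only [if_neg h]
          exact hasDerivAt_const t _
      exact t1.add t2
    have hlast : HasDerivAt (fun s : ℝ => if Fin.last (m + 1) = j then
          -(g (Fin.last (m + 2)) * Real.exp (-s - x (Fin.last m))) else 0)
        (if Fin.last (m + 1) = j then
          g (Fin.last (m + 2)) * Real.exp (-t - x (Fin.last m)) else 0) t := by
      by_cases h : Fin.last (m + 1) = j
      · simp only [if_pos h]
        exact (hF_exp t (x (Fin.last m)) (g (Fin.last (m + 2)))).neg.congr_deriv (by simp)
      · simp only [if_neg h]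
        exact hasDerivAt_const t _
    exact (hd.add hsum).add hlast
  have hmain := dd_exp (fun t => Qker m g x (Function.update z j t))
      (fun s => g 0 * Real.exp (Function.update z j s 0)
        + (∑ i : Fin (m + 1), (Real.exp (x i - Function.update z j s i.castSucc)
            + g i.succ.castSucc * Real.exp (Function.update z j s i.succ - x i)))
        + g (Fin.last (m + 2)) * Real.exp (-Function.update z j s (Fin.last (m + 1))
            - x (Fin.last m)))
      D1 D2 (fun s => rfl) h1 h2 (z j)
  have hpd : pd2 (fun v => Qker m g x v) j z
      = deriv (deriv (fun t => Qker m g x (Function.update z j t))) (z j) := rfl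
  rw [hpd, hmain]
  simp only [Function.update_eq_self]
  have hfac : Real.exp (g 0 * Real.exp (z 0)
      + (∑ i : Fin (m + 1), (Real.exp (x i - z i.castSucc)
          + g i.succ.castSucc * Real.exp (z i.succ - x i)))
      + g (Fin.last (m + 2)) * Real.exp (-z (Fin.last (m + 1)) - x (Fin.last m)))
      = Qker m g x z := rfl
  rw [hfac]
  have hP : (if (0 : Fin (m + 2)) = j then g 0 * Real.exp (z j) else 0)
      + (∑ i : Fin (m + 1), (if i.succ = j then g i.succ.castSucc * Real.exp (z j - x i) else 0))
      = (Fin.cons (dF m g z) (bF m g x z) : Fin (m + 2) → ℝ) j := by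
    induction j using Fin.cases with
    | zero =>
      rw [if_pos rfl, Fin.cons_zero]
      have : ∀ i : Fin (m + 1), ¬(i.succ = (0 : Fin (m + 2))) := fun i => Fin.succ_ne_zero i
      simp [this, dF]
    | succ i =>
      rw [if_neg (Ne.symm (Fin.succ_ne_zero i)), Fin.cons_succ]
      have : ∀ i' : Fin (m + 1), (i'.succ = i.succ) ↔ i' = i := fun i' => Fin.succ_inj
      simp only [this]
      rw [Finset.sum_ite_eq' Finset.univ i]
      simp [bF]
  have hN : (∑ i : Fin (m + 1), (if i.castSucc = j then Real.exp (x i - z j) else 0))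
      + (if Fin.last (m + 1) = j then cF m g x z else 0)
      = (Fin.snoc (aF m x z) (cF m g x z) : Fin (m + 2) → ℝ) j := by
    induction j using Fin.lastCases with
    | last =>
      rw [if_pos rfl, Fin.snoc_last]
      have : ∀ i : Fin (m + 1), ¬(i.castSucc = Fin.last (m + 1)) :=
        fun i => (Fin.castSucc_lt_last i).ne
      simp [this]
    | cast i =>
      rw [if_neg (Fin.castSucc_lt_last i).ne', Fin.snoc_castSucc]
      have : ∀ i' : Fin (m + 1), (i'.castSucc = i.castSucc) ↔ i' = i :=
        fun i' => Fin.castSucc_inj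
      simp only [this]
      rw [Finset.sum_ite_eq' Finset.univ i]
      simp [aF]
  have e1 : D1 (z j)
      = (Fin.cons (dF m g z) (bF m g x z) : Fin (m + 2) → ℝ) j
        - (Fin.snoc (aF m x z) (cF m g x z) : Fin (m + 2) → ℝ) j := by
    rw [hD1, ← hP, ← hN]
    simp only [neg_ite_zero, Finset.sum_add_distrib, Finset.sum_neg_distrib]
    have hc : (if Fin.last (m + 1) = j then
          g (Fin.last (m + 2)) * Real.exp (-z j - x (Fin.last m)) else 0)
        = (if Fin.last (m + 1) = j then cF m g x z else 0) := by
      by_cases h : Fin.last (m + 1) = j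
      · rw [if_pos h, if_pos h, ← h]
        rfl
      · rw [if_neg h, if_neg h]
    rw [hc]
    ring
  have e2 : D2 (z j)
      = (Fin.cons (dF m g z) (bF m g x z) : Fin (m + 2) → ℝ) j
        + (Fin.snoc (aF m x z) (cF m g x z) : Fin (m + 2) → ℝ) j := by
    rw [hD2, ← hP, ← hN]
    simp only [Finset.sum_add_distrib]
    have hc : (if Fin.last (m + 1) = j then
          g (Fin.last (m + 2)) * Real.exp (-z j - x (Fin.last m)) else 0)
        = (if Fin.last (m + 1) = j then cF m g x z else 0) := by
      by_cases h : Fin.last (m + 1) = j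
      · rw [if_pos h, if_pos h, ← h]
        rfl
      · rw [if_neg h, if_neg h]
    rw [hc]
    ring
  rw [e1, e2]

end A2BC

open A2BC in
/-- The kernel `Q` intertwines the quadratic Hamiltonians of the twisted affine
`A^{(2)}_{2n}` and `BC^{(2)}_{n+1}` closed Toda chains, `n = m + 1 ≥ 1`. -/
theorem A2even_BC2_intertwining (m : ℕ) (g : Fin (m + 3) → ℝ)
    (x : Fin (m + 1) → ℝ) (z : Fin (m + 2) → ℝ) :
    -(1/2) * (∑ i : Fin (m + 1), pd2 (fun u => Qker m g u z) i x)
      + (g 0 * Real.exp (x 0)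
          + (∑ i : Fin m, g i.succ.castSucc.castSucc * Real.exp (x i.succ - x i.castSucc))
          + 2 * (g (Fin.last (m + 1)).castSucc * g (Fin.last (m + 2)))
              * Real.exp (-(2 * x (Fin.last m)))) * Qker m g x z
    = -(1/2) * (∑ i : Fin (m + 2), pd2 (fun v => Qker m g x v) i z)
      + ((g 0 / 2) * (Real.exp (z 0) + g 0 * Real.exp (2 * z 0))
          + (∑ i : Fin (m + 1), g i.succ.castSucc * Real.exp (z i.succ - z i.castSucc))
          + g (Fin.last (m + 2))
              * Real.exp (-z (Fin.last (m + 1)) - z (Fin.last m).castSucc)) * Qker m g x z := by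
  classical
  have hx : ∀ i : Fin (m + 1), pd2 (fun u => Qker m g u z) i x
      = ((aF m x z i)^2 + (bF m g x z i)^2 - 2*(aF m x z i * bF m g x z i)
          + aF m x z i + bF m g x z i
          + (if i = Fin.last m then
              -(2*(aF m x z i - bF m g x z i)*(cF m g x z)) + (cF m g x z)^2 + cF m g x z
            else 0)) * Qker m g x z := by
    intro i
    rw [pd2_x]
    congr 1
    by_cases hi : i = Fin.last m
    · simp only [if_pos hi]; ring
    · simp only [if_neg hi]; ring
  have hX : ∑ i : Fin (m + 1), pd2 (fun u => Qker m g u z) i x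
      = ((∑ i : Fin (m + 1), (aF m x z i)^2) + (∑ i : Fin (m + 1), (bF m g x z i)^2)
          - 2*(∑ i : Fin (m + 1), aF m x z i * bF m g x z i)
          + (∑ i : Fin (m + 1), aF m x z i) + (∑ i : Fin (m + 1), bF m g x z i)
          + (-(2*(aF m x z (Fin.last m) - bF m g x z (Fin.last m))*(cF m g x z))
              + (cF m g x z)^2 + cF m g x z)) * Qker m g x z := by
    rw [Finset.sum_congr rfl fun i _ => hx i, ← Finset.sum_mul]
    congr 1
    simp only [Finset.sum_add_distrib, Finset.sum_sub_distrib, ← Finset.mul_sum,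
      Finset.sum_ite_eq' Finset.univ (Fin.last m), Finset.mem_univ, if_true]
  have hz : ∀ j : Fin (m + 2), pd2 (fun v => Qker m g x v) j z
      = (((Fin.cons (dF m g z) (bF m g x z) : Fin (m + 2) → ℝ) j)^2
          + ((Fin.snoc (aF m x z) (cF m g x z) : Fin (m + 2) → ℝ) j)^2
          - 2*((Fin.cons (dF m g z) (bF m g x z) : Fin (m + 2) → ℝ) j
              * (Fin.snoc (aF m x z) (cF m g x z) : Fin (m + 2) → ℝ) j)
          + (Fin.cons (dF m g z) (bF m g x z) : Fin (m + 2) → ℝ) j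
          + (Fin.snoc (aF m x z) (cF m g x z) : Fin (m + 2) → ℝ) j) * Qker m g x z := by
    intro j
    rw [pd2_z]
    congr 1
    ring
  have hP2 : ∑ j : Fin (m + 2), ((Fin.cons (dF m g z) (bF m g x z) : Fin (m + 2) → ℝ) j)^2
      = (dF m g z)^2 + ∑ i : Fin (m + 1), (bF m g x z i)^2 := by
    rw [Fin.sum_univ_succ]
    simp
  have hN2 : ∑ j : Fin (m + 2), ((Fin.snoc (aF m x z) (cF m g x z) : Fin (m + 2) → ℝ) j)^2
      = (∑ i : Fin (m + 1), (aF m x z i)^2) + (cF m g x z)^2 := by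
    rw [Fin.sum_univ_castSucc]
    simp
  have hPN : ∑ j : Fin (m + 2), ((Fin.cons (dF m g z) (bF m g x z) : Fin (m + 2) → ℝ) j
        * (Fin.snoc (aF m x z) (cF m g x z) : Fin (m + 2) → ℝ) j)
      = dF m g z * aF m x z 0
        + ((∑ k : Fin m, bF m g x z k.castSucc * aF m x z k.succ)
            + bF m g x z (Fin.last m) * cF m g x z) := by
    rw [Fin.sum_univ_succ]
    congr 1
    · simp only [Fin.cons_succ]
      rw [Fin.sum_univ_castSucc]
      congr 1
      · refine Finset.sum_congr rfl fun k _ => ?_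
        rw [Fin.succ_castSucc, Fin.snoc_castSucc]
      · rw [Fin.succ_last, Fin.snoc_last]
  have hp : ∑ j : Fin (m + 2), (Fin.cons (dF m g z) (bF m g x z) : Fin (m + 2) → ℝ) j
      = dF m g z + ∑ i : Fin (m + 1), bF m g x z i := by
    simp [Fin.sum_univ_succ]
  have hn : ∑ j : Fin (m + 2), (Fin.snoc (aF m x z) (cF m g x z) : Fin (m + 2) → ℝ) j
      = (∑ i : Fin (m + 1), aF m x z i) + cF m g x z := by
    simp [Fin.sum_univ_castSucc]
  have hZ : ∑ j : Fin (m + 2), pd2 (fun v => Qker m g x v) j z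
      = (((dF m g z)^2 + ∑ i : Fin (m + 1), (bF m g x z i)^2)
          + ((∑ i : Fin (m + 1), (aF m x z i)^2) + (cF m g x z)^2)
          - 2*(dF m g z * aF m x z 0
              + ((∑ k : Fin m, bF m g x z k.castSucc * aF m x z k.succ)
                  + bF m g x z (Fin.last m) * cF m g x z))
          + (dF m g z + ∑ i : Fin (m + 1), bF m g x z i)
          + ((∑ i : Fin (m + 1), aF m x z i) + cF m g x z)) * Qker m g x z := by
    rw [Finset.sum_congr rfl fun j _ => hz j, ← Finset.sum_mul]
    congr 1
    simp only [Finset.sum_add_distrib, Finset.sum_sub_distrib, ← Finset.mul_sum]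
    rw [hP2, hN2, hPN, hp, hn]
  have hV1 : g 0 * Real.exp (x 0) = dF m g z * aF m x z 0 := by
    simp only [dF, aF, Fin.castSucc_zero, mul_assoc, ← Real.exp_add]
    congr 2
    ring
  have hV2 : (∑ k : Fin m, g k.succ.castSucc.castSucc * Real.exp (x k.succ - x k.castSucc))
      = ∑ k : Fin m, bF m g x z k.castSucc * aF m x z k.succ := by
    refine Finset.sum_congr rfl fun k _ => ?_
    simp only [bF, aF, Fin.succ_castSucc]
    rw [mul_assoc, ← Real.exp_add]
    congr 2
    ring
  have hV3 : 2 * (g (Fin.last (m + 1)).castSucc * g (Fin.last (m + 2)))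
        * Real.exp (-(2 * x (Fin.last m)))
      = 2 * (bF m g x z (Fin.last m) * cF m g x z) := by
    simp only [bF, cF, Fin.succ_last]
    have h : Real.exp (z (Fin.last (m + 1)) - x (Fin.last m))
        * Real.exp (-z (Fin.last (m + 1)) - x (Fin.last m))
        = Real.exp (-(2 * x (Fin.last m))) := by
      rw [← Real.exp_add]; congr 1; ring
    rw [← h]
    ring
  have hW1 : g 0 / 2 * (Real.exp (z 0) + g 0 * Real.exp (2 * z 0))
      = (dF m g z + (dF m g z)^2) / 2 := by
    simp only [dF]
    have h : Real.exp (2 * z 0) = Real.exp (z 0) * Real.exp (z 0) := by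
      rw [← Real.exp_add]; congr 1; ring
    rw [h]
    ring
  have hW2 : (∑ i : Fin (m + 1), g i.succ.castSucc * Real.exp (z i.succ - z i.castSucc))
      = ∑ i : Fin (m + 1), aF m x z i * bF m g x z i := by
    refine Finset.sum_congr rfl fun i _ => ?_
    simp only [aF, bF]
    have h : Real.exp (x i - z i.castSucc) * Real.exp (z i.succ - x i)
        = Real.exp (z i.succ - z i.castSucc) := by
      rw [← Real.exp_add]; congr 1; ring
    rw [← h]
    ring
  have hW3 : g (Fin.last (m + 2)) * Real.exp (-z (Fin.last (m + 1)) - z (Fin.last m).castSucc)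
      = aF m x z (Fin.last m) * cF m g x z := by
    simp only [aF, cF]
    have h : Real.exp (x (Fin.last m) - z (Fin.last m).castSucc)
        * Real.exp (-z (Fin.last (m + 1)) - x (Fin.last m))
        = Real.exp (-z (Fin.last (m + 1)) - z (Fin.last m).castSucc) := by
      rw [← Real.exp_add]; congr 1; ring
    rw [← h]
    ring
  rw [hX, hZ, hV1, hV2, hV3, hW1, hW2, hW3]
  ring
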